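/- Fix a period n and cycle length a ≥ 2 with n + a − 1 ≤ T. Suppose y_{n,a} is a global minimizer of L_{n,a} and y_{n+1,a−1} is a global minimizer of L_{n+1,a−1}, and set ℓ_{n,a} = K + L_{n,a}(y_{n,a}), ℓ_{n,1} = K + L_{n,1}(y_{n,1}), ℓ_{n+1,a−1} = K + L_{n+1,a−1}(y_{n+1,a−1}). If L_{n,1}(y_{n,a}) > ℓ_{n,1}, then ℓ_{n,a} > ℓ_{n,1} + ℓ_{n+1,a−1}; that is, the single cycle of length a starting in period n is strictly more costly than splitting it into a cycle of length 1 at period n followed by a cycle of length a − 1 starting at period n + 1. -/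

import Mathlib

open MeasureTheory ProbabilityTheory

/-- Accumulated demand `ξ_{n,k} = ξ_n + ⋯ + ξ_{n+k-1}`. -/
noncomputable def acc {Ω : Type*} (ξ : ℕ → Ω → ℝ) (n k : ℕ) (ω : Ω) : ℝ :=
  ∑ i ∈ Finset.range k, ξ (n + i) ω

/-- Cumulative distribution function `φ_{n,k}(y) = P(ξ_{n,k} ≤ y)` of accumulated demand. -/
noncomputable def cdf {Ω : Type*} [MeasurableSpace Ω] (μ : Measure Ω) (ξ : ℕ → Ω → ℝ)
    (n k : ℕ) (y : ℝ) : ℝ :=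
  (μ {ω | acc ξ n k ω ≤ y}).toReal

/-- Multi-period cost function
`L_{n,a}(y) = Σ_{k=1}^{a} (h·E[(y − ξ_{n,k})⁺] + p·E[(ξ_{n,k} − y)⁺])`. -/
noncomputable def Lmp {Ω : Type*} [MeasurableSpace Ω] (μ : Measure Ω) (h p : ℝ)
    (ξ : ℕ → Ω → ℝ) (n a : ℕ) (y : ℝ) : ℝ :=
  ∑ k ∈ Finset.Icc 1 a,
    (h * ∫ ω, max (y - acc ξ n k ω) 0 ∂μ + p * ∫ ω, max (acc ξ n k ω - y) 0 ∂μ)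
/-- Key step of Lemma 1: if `L_{n,1}(y_{n,a}) > ℓ_{n,1}`, then
`ℓ_{n,a} > ℓ_{n,1} + ℓ_{n+1,a−1}`. -/
lemma acc_meas {Ω : Type*} [MeasurableSpace Ω] (ξ : ℕ → Ω → ℝ)
    (hmeas : ∀ i, Measurable (ξ i)) (n k : ℕ) : Measurable (acc ξ n k) := by
  unfold acc; exact Finset.measurable_sum _ fun i _ => hmeas _

lemma acc_int {Ω : Type*} [MeasurableSpace Ω] (μ : Measure Ω) (ξ : ℕ → Ω → ℝ)
    (hint : ∀ i, Integrable (ξ i) μ) (n k : ℕ) : Integrable (acc ξ n k) μ := by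
  unfold acc; exact integrable_finset_sum _ fun i _ => hint _

lemma max_int1 {Ω : Type*} [MeasurableSpace Ω] (μ : Measure Ω) [IsFiniteMeasure μ] (ξ : ℕ → Ω → ℝ)
    (hint : ∀ i, Integrable (ξ i) μ) (n k : ℕ) (y : ℝ) :
    Integrable (fun ω => max (y - acc ξ n k ω) 0) μ :=
  ((integrable_const y).sub (acc_int μ ξ hint n k)).pos_part

lemma max_int2 {Ω : Type*} [MeasurableSpace Ω] (μ : Measure Ω) [IsFiniteMeasure μ] (ξ : ℕ → Ω → ℝ)
    (hint : ∀ i, Integrable (ξ i) μ) (n k : ℕ) (y : ℝ) :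
    Integrable (fun ω => max (acc ξ n k ω - y) 0) μ :=
  ((acc_int μ ξ hint n k).sub (integrable_const y)).pos_part

lemma acc_succ {Ω : Type*} (ξ : ℕ → Ω → ℝ) (n k : ℕ) (ω : Ω) :
    acc ξ n (k + 1) ω = ξ n ω + acc ξ (n + 1) k ω := by
  unfold acc
  rw [Finset.sum_range_succ']
  simp only [Nat.add_zero]
  rw [add_comm]
  congr 1
  exact Finset.sum_congr rfl fun i _ => by ring_nf

/-- The key independence lemma: the tail cost of an `a`-cycle, shifted by the first-period
demand, dominates the minimal tail cost. -/
lemma tail_ge {Ω : Type*} [MeasurableSpace Ω] (μ : Measure Ω) [IsProbabilityMeasure μ]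
    (ξ : ℕ → Ω → ℝ) (hmeas : ∀ i, Measurable (ξ i)) (hint : ∀ i, Integrable (ξ i) μ)
    (hind : iIndepFun ξ μ)
    (h p : ℝ) (n m : ℕ) (y z : ℝ)
    (hz : ∀ w, Lmp μ h p ξ (n + 1) m z ≤ Lmp μ h p ξ (n + 1) m w) :
    Lmp μ h p ξ (n + 1) m z ≤
      ∑ k ∈ Finset.Icc 1 m,
        (h * ∫ ω, max (y - acc ξ n (k + 1) ω) 0 ∂μ
          + p * ∫ ω, max (acc ξ n (k + 1) ω - y) 0 ∂μ) := by
  classical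
  set T : Finset ℕ := Finset.Ico (n + 1) (n + 1 + m) with hT
  set W : Ω → (T → ℝ) := fun ω i => ξ i ω with hW
  set Φ : (T → ℝ) → ℕ → ℝ := fun v i => if hi : i ∈ T then v ⟨i, hi⟩ else 0 with hΦ
  set F : ℝ × (T → ℝ) → ℝ := fun q =>
    ∑ k ∈ Finset.Icc 1 m,
      (h * max (y - q.1 - ∑ i ∈ Finset.range k, Φ q.2 (n + 1 + i)) 0
        + p * max ((∑ i ∈ Finset.range k, Φ q.2 (n + 1 + i)) - (y - q.1)) 0) with hF
  have hΦmeas : ∀ i, Measurable fun v : T → ℝ => Φ v i := by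
    intro i
    by_cases hi : i ∈ T
    · simpa [hΦ, hi] using measurable_pi_apply (⟨i, hi⟩ : T)
    · simpa [hΦ, hi] using measurable_const
  have hSmeas : ∀ k, Measurable fun v : T → ℝ => ∑ i ∈ Finset.range k, Φ v (n + 1 + i) :=
    fun k => Finset.measurable_sum _ fun i _ => hΦmeas _
  have hFmeas : Measurable F := by
    refine Finset.measurable_sum _ fun k _ => Measurable.add ?_ ?_
    · exact (((measurable_const.sub measurable_fst).sub
        ((hSmeas k).comp measurable_snd)).max measurable_const).const_mul h
    · exact ((((hSmeas k).comp measurable_snd).sub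
        (measurable_const.sub measurable_fst)).max measurable_const).const_mul p
  have hWmeas : Measurable W := measurable_pi_lambda _ fun i => hmeas i
  -- key pointwise computation of the demand sums
  have hSum : ∀ (k : ℕ), k ≤ m → ∀ ω, (∑ i ∈ Finset.range k, Φ (W ω) (n + 1 + i))
      = acc ξ (n + 1) k ω := by
    intro k hk ω
    refine Finset.sum_congr rfl fun i hi => ?_
    have hi' : n + 1 + i ∈ T := by
      simp only [hT, Finset.mem_Ico]
      constructor
      · omega
      · have := Finset.mem_range.1 hi; omega
    simp [hΦ, hi', hW]
  have hGeq : ∀ ω, F (ξ n ω, W ω)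
      = ∑ k ∈ Finset.Icc 1 m,
        (h * max (y - acc ξ n (k + 1) ω) 0 + p * max (acc ξ n (k + 1) ω - y) 0) := by
    intro ω
    refine Finset.sum_congr rfl fun k hk => ?_
    have hk' : k ≤ m := (Finset.mem_Icc.1 hk).2
    rw [hSum k hk' ω, acc_succ]
    ring_nf
  -- integrability of the composed function
  have hGint : Integrable (fun ω => F (ξ n ω, W ω)) μ := by
    rw [funext hGeq]
    refine integrable_finset_sum _ fun k _ => Integrable.add ?_ ?_
    · exact (max_int1 μ ξ hint n (k + 1) y).const_mul h
    · exact (max_int2 μ ξ hint n (k + 1) y).const_mul p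
  -- independence of ξ n and the tail tuple W
  have hdisj : Disjoint ({n} : Finset ℕ) T := by
    simp only [hT, Finset.disjoint_singleton_left, Finset.mem_Ico]
    omega
  have hIndep0 := hind.indepFun_finset {n} T hdisj hmeas
  have hnmem : n ∈ ({n} : Finset ℕ) := Finset.mem_singleton_self n
  have hIndep : IndepFun (ξ n) W μ := by
    have := hIndep0.comp (φ := fun v : ({n} : Finset ℕ) → ℝ => v ⟨n, hnmem⟩)
      (ψ := id) (show Measurable fun v : ({n} : Finset ℕ) → ℝ => v ⟨n, hnmem⟩ from measurable_pi_apply _) measurable_id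
    exact this
  have hpairmeas : Measurable fun ω => (ξ n ω, W ω) := (hmeas n).prodMk hWmeas
  have hlaw : μ.map (fun ω => (ξ n ω, W ω)) = (μ.map (ξ n)).prod (μ.map W) :=
    (indepFun_iff_map_prod_eq_prod_map_map (hmeas n).aemeasurable hWmeas.aemeasurable).1 hIndep
  have hFint : Integrable F ((μ.map (ξ n)).prod (μ.map W)) := by
    rw [← hlaw]
    exact (integrable_map_measure hFmeas.aestronglyMeasurable
      hpairmeas.aemeasurable).2 hGint
  have hInner : ∀ x : ℝ, ∫ v, F (x, v) ∂(μ.map W) = Lmp μ h p ξ (n + 1) m (y - x) := by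
    intro x
    have hg : Measurable fun v : T → ℝ => F (x, v) :=
      hFmeas.comp (measurable_const.prodMk measurable_id)
    rw [integral_map hWmeas.aemeasurable hg.aestronglyMeasurable]
    have heq : ∀ ω, F (x, W ω) = ∑ k ∈ Finset.Icc 1 m,
        (h * max ((y - x) - acc ξ (n + 1) k ω) 0
          + p * max (acc ξ (n + 1) k ω - (y - x)) 0) := by
      intro ω
      refine Finset.sum_congr rfl fun k hk => ?_
      rw [hSum k (Finset.mem_Icc.1 hk).2 ω]
    rw [integral_congr_ae (Filter.Eventually.of_forall heq)]
    rw [integral_finset_sum _ fun k _ => by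
      exact ((max_int1 μ ξ hint (n + 1) k (y - x)).const_mul h).add
        ((max_int2 μ ξ hint (n + 1) k (y - x)).const_mul p)]
    unfold Lmp
    refine Finset.sum_congr rfl fun k _ => ?_
    rw [integral_add ((max_int1 μ ξ hint (n + 1) k (y - x)).const_mul h)
      ((max_int2 μ ξ hint (n + 1) k (y - x)).const_mul p),
      integral_const_mul, integral_const_mul]
  haveI : IsProbabilityMeasure (μ.map (ξ n)) :=
    Measure.isProbabilityMeasure_map (hmeas n).aemeasurable
  calc Lmp μ h p ξ (n + 1) m z
      = ∫ _x, Lmp μ h p ξ (n + 1) m z ∂(μ.map (ξ n)) := by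
        rw [integral_const]; simp
    _ ≤ ∫ x, ∫ v, F (x, v) ∂(μ.map W) ∂(μ.map (ξ n)) := by
        refine integral_mono (integrable_const _) hFint.integral_prod_left fun x => ?_
        rw [hInner x]; exact hz (y - x)
    _ = ∫ q, F q ∂((μ.map (ξ n)).prod (μ.map W)) := (integral_prod F hFint).symm
    _ = ∫ ω, F (ξ n ω, W ω) ∂μ := by
        rw [← hlaw, integral_map hpairmeas.aemeasurable hFmeas.aestronglyMeasurable]
    _ = ∑ k ∈ Finset.Icc 1 m,
        (h * ∫ ω, max (y - acc ξ n (k + 1) ω) 0 ∂μ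
          + p * ∫ ω, max (acc ξ n (k + 1) ω - y) 0 ∂μ) := by
        rw [integral_congr_ae (Filter.Eventually.of_forall hGeq)]
        rw [integral_finset_sum _ fun k _ => by
          exact ((max_int1 μ ξ hint n (k + 1) y).const_mul h).add
            ((max_int2 μ ξ hint n (k + 1) y).const_mul p)]
        refine Finset.sum_congr rfl fun k _ => ?_
        rw [integral_add ((max_int1 μ ξ hint n (k + 1) y).const_mul h)
          ((max_int2 μ ξ hint n (k + 1) y).const_mul p),
          integral_const_mul, integral_const_mul]

lemma sum_Icc_succ_split (f : ℕ → ℝ) (m : ℕ) :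
    ∑ k ∈ Finset.Icc 1 (m + 1), f k = f 1 + ∑ k ∈ Finset.Icc 1 m, f (k + 1) := by
  induction m with
  | zero => simp
  | succ m ih =>
    rw [Finset.sum_Icc_succ_top (by omega : 1 ≤ m + 1 + 1), ih,
      Finset.sum_Icc_succ_top (by omega : 1 ≤ m + 1)]
    ring


theorem stmt6 {Ω : Type*} [MeasurableSpace Ω] (μ : Measure Ω) [IsProbabilityMeasure μ]
    (T : ℕ) (ξ : ℕ → Ω → ℝ)
    (hmeas : ∀ i, Measurable (ξ i)) (hint : ∀ i, Integrable (ξ i) μ)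
    (hpos : ∀ i, ∀ᵐ ω ∂μ, 0 ≤ ξ i ω)
    (hind : iIndepFun ξ μ)
    (h p K : ℝ) (hh : 0 < h) (hp : 0 < p) (hK : 0 ≤ K)
    (n a : ℕ) (hn : 1 ≤ n) (ha : 2 ≤ a) (hna : n + a - 1 ≤ T)
    (yna yn1 yn1a : ℝ)
    (hyna : ∀ z, Lmp μ h p ξ n a yna ≤ Lmp μ h p ξ n a z)
    (hyn1 : ∀ z, Lmp μ h p ξ n 1 yn1 ≤ Lmp μ h p ξ n 1 z)
    (hyn1a : ∀ z, Lmp μ h p ξ (n + 1) (a - 1) yn1a ≤ Lmp μ h p ξ (n + 1) (a - 1) z)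
    (hcond : K + Lmp μ h p ξ n 1 yn1 < Lmp μ h p ξ n 1 yna) :
    (K + Lmp μ h p ξ n 1 yn1) + (K + Lmp μ h p ξ (n + 1) (a - 1) yn1a) <
      K + Lmp μ h p ξ n a yna := by
  obtain ⟨m, rfl, hm⟩ : ∃ m, a = m + 1 ∧ 1 ≤ m := ⟨a - 1, by omega, by omega⟩
  simp only [Nat.add_sub_cancel] at hyn1a ⊢
  have key := tail_ge μ ξ hmeas hint hind h p n m yna yn1a hyn1a
  have hL : Lmp μ h p ξ n (m + 1) yna = Lmp μ h p ξ n 1 yna +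
      ∑ k ∈ Finset.Icc 1 m,
        (h * ∫ ω, max (yna - acc ξ n (k + 1) ω) 0 ∂μ
          + p * ∫ ω, max (acc ξ n (k + 1) ω - yna) 0 ∂μ) := by
    unfold Lmp
    rw [Finset.Icc_self, Finset.sum_singleton]
    exact sum_Icc_succ_split _ m
  linarith
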